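/- (Matching Three Moments Theorem, deterministic eigenvalue version.) Let m be a positive integer, let μ be the Haar probability measure on the real orthogonal group O(m), and let A and B be m×m real diagonal matrices. Then for each j ∈ {1, 2, 3}, the j-th moment of the isotropic sum equals the j-th moment of the classical sum: (1/m) ∫_{O(m)} Tr((A + Qᵀ B Q)^j) dμ(Q) = (1/m!) Σ_π (1/m) Tr((A + P_πᵀ B P_π)^j), where the sum on the right is over all m! permutations π of {1,…,m} and P_π is the corresponding permutation matrix. -/

import Mathlib

open MeasureTheory Matrix

variable {m : ℕ}

lemma perm_orth (σ : Equiv.Perm (Fin m)) :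
    (σ.permMatrix ℝ)ᵀ * σ.permMatrix ℝ = 1 := by
  rw [Equiv.Perm.permMatrix, ← PEquiv.toMatrix_symm, ← Equiv.toPEquiv_symm,
    ← PEquiv.toMatrix_trans, ← Equiv.toPEquiv_trans]
  simp

section ortho
variable (X : Matrix (Fin m) (Fin m) ℝ)

lemma conj_trace (hX' : X * Xᵀ = 1) (f : Fin m → ℝ) :
    (Xᵀ * diagonal f * X).trace = ∑ i, f i := by
  rw [Matrix.mul_assoc, trace_mul_comm, Matrix.mul_assoc, hX', Matrix.mul_one,
    trace_diagonal]

lemma conj_mul_conj (hX' : X * Xᵀ = 1) (f g : Fin m → ℝ) :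
    (Xᵀ * diagonal f * X) * (Xᵀ * diagonal g * X) = Xᵀ * diagonal (fun i => f i * g i) * X := by
  rw [← diagonal_mul_diagonal]
  calc Xᵀ * diagonal f * X * (Xᵀ * diagonal g * X)
      = Xᵀ * diagonal f * (X * Xᵀ) * (diagonal g * X) := by
        simp only [Matrix.mul_assoc]
    _ = Xᵀ * (diagonal f * diagonal g) * X := by rw [hX']; simp only [Matrix.mul_one,
        Matrix.mul_assoc]

noncomputable def S (f g : Fin m → ℝ) (X : Matrix (Fin m) (Fin m) ℝ) : ℝ :=
  ∑ i, ∑ k, f i * g k * (X k i) ^ 2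

lemma trace_diag_conj (f g : Fin m → ℝ) :
    (diagonal f * (Xᵀ * diagonal g * X)).trace = S f g X := by
  rw [trace, S]
  refine Finset.sum_congr rfl fun i _ => ?_
  rw [diag_apply, Matrix.diagonal_mul, Matrix.mul_apply, Finset.mul_sum]
  refine Finset.sum_congr rfl fun k _ => ?_
  rw [Matrix.mul_diagonal, transpose_apply]
  ring

lemma trace_pow_one (hX : Xᵀ * X = 1) (a b : Fin m → ℝ) :
    ((diagonal a + Xᵀ * diagonal b * X) ^ 1).trace = ∑ i, a i + ∑ i, b i := by
  have hX' : X * Xᵀ = 1 := mul_eq_one_comm.mp hX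
  rw [pow_one, trace_add, trace_diagonal, conj_trace X hX']

lemma trace_pow_two (hX : Xᵀ * X = 1) (a b : Fin m → ℝ) :
    ((diagonal a + Xᵀ * diagonal b * X) ^ 2).trace
      = ∑ i, a i ^ 2 + ∑ i, b i ^ 2 + 2 * S a b X := by
  have hX' : X * Xᵀ = 1 := mul_eq_one_comm.mp hX
  set A := diagonal a with hA
  set C := Xᵀ * diagonal b * X with hC
  have expand : (A + C) ^ 2 = A * A + A * C + C * A + C * C := by noncomm_ring
  rw [expand, trace_add, trace_add, trace_add]
  have h1 : (A * A).trace = ∑ i, a i ^ 2 := by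
    rw [hA, diagonal_mul_diagonal, trace_diagonal]
    exact Finset.sum_congr rfl fun i _ => (sq (a i)).symm
  have h2 : (A * C).trace = S a b X := trace_diag_conj X a b
  have h3 : (C * A).trace = S a b X := by rw [trace_mul_comm]; exact h2
  have h4 : (C * C).trace = ∑ i, b i ^ 2 := by
    rw [hC, conj_mul_conj X hX', conj_trace X hX']
    exact Finset.sum_congr rfl fun i _ => (sq (b i)).symm
  rw [h1, h2, h3, h4]; ring

lemma trace_pow_three (hX : Xᵀ * X = 1) (a b : Fin m → ℝ) :
    ((diagonal a + Xᵀ * diagonal b * X) ^ 3).trace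
      = ∑ i, a i ^ 3 + ∑ i, b i ^ 3
        + 3 * S (fun i => a i ^ 2) b X + 3 * S a (fun i => b i ^ 2) X := by
  have hX' : X * Xᵀ = 1 := mul_eq_one_comm.mp hX
  set A := diagonal a with hA
  set C := Xᵀ * diagonal b * X with hC
  have expand : (A + C) ^ 3 = A * (A * A) + A * (A * C) + A * (C * A) + A * (C * C)
      + C * (A * A) + C * (A * C) + C * (C * A) + C * (C * C) := by noncomm_ring
  rw [expand]
  simp only [trace_add]
  have hAA : A * A = diagonal (fun i => a i ^ 2) := by
    rw [hA, diagonal_mul_diagonal]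
    exact congrArg _ (funext fun i => (sq (a i)).symm)
  have hCC : C * C = Xᵀ * diagonal (fun i => b i ^ 2) * X := by
    rw [hC, conj_mul_conj X hX']
    congr 2
    exact congrArg _ (funext fun i => (sq (b i)).symm)
  have t1 : (A * (A * A)).trace = ∑ i, a i ^ 3 := by
    rw [hAA, hA, diagonal_mul_diagonal, trace_diagonal]
    exact Finset.sum_congr rfl fun i _ => by ring
  have t2 : (A * (A * C)).trace = S (fun i => a i ^ 2) b X := by
    rw [← Matrix.mul_assoc, hAA, trace_diag_conj]
  have t3 : (A * (C * A)).trace = S (fun i => a i ^ 2) b X := by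
    rw [← Matrix.mul_assoc, trace_mul_comm, ← Matrix.mul_assoc, hAA, trace_diag_conj]
  have t4 : (A * (C * C)).trace = S a (fun i => b i ^ 2) X := by
    rw [hCC, trace_diag_conj]
  have t5 : (C * (A * A)).trace = S (fun i => a i ^ 2) b X := by
    rw [trace_mul_comm, hAA, trace_diag_conj]
  have t6 : (C * (A * C)).trace = S a (fun i => b i ^ 2) X := by
    rw [trace_mul_comm, Matrix.mul_assoc]; exact t4
  have t7 : (C * (C * A)).trace = S a (fun i => b i ^ 2) X := by
    rw [← Matrix.mul_assoc, trace_mul_comm]; exact t4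
  have t8 : (C * (C * C)).trace = ∑ i, b i ^ 3 := by
    rw [hCC]
    conv_lhs => rw [hC]
    rw [conj_mul_conj X hX', conj_trace X hX']
    exact Finset.sum_congr rfl fun i _ => by ring
  rw [t1, t2, t3, t4, t5, t6, t7, t8]; ring

end ortho

lemma S_perm (f g : Fin m → ℝ) (σ : Equiv.Perm (Fin m)) :
    S f g (σ.permMatrix ℝ) = ∑ k, f (σ k) * g k := by
  rw [S, Finset.sum_comm]
  refine Finset.sum_congr rfl fun k _ => ?_
  rw [Finset.sum_eq_single (σ k)]
  · simp [Equiv.Perm.permMatrix, PEquiv.toMatrix_apply, Equiv.toPEquiv_apply]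
  · intro i _ hi
    simp [Equiv.Perm.permMatrix, PEquiv.toMatrix_apply, Equiv.toPEquiv_apply, Ne.symm hi]
  · simp

lemma sum_perm_apply {n : ℕ} (g : Fin (n + 1) → ℝ) (i : Fin (n + 1)) :
    ∑ σ : Equiv.Perm (Fin (n + 1)), g (σ i) = (Nat.factorial n : ℝ) * ∑ k, g k := by
  have h0 : ∑ σ : Equiv.Perm (Fin (n + 1)), g (σ i)
      = ∑ σ : Equiv.Perm (Fin (n + 1)), g (σ 0) := by
    rw [← Equiv.sum_comp (Equiv.mulRight (Equiv.swap (0 : Fin (n+1)) i))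
      (fun σ => g (σ 0))]
    refine Finset.sum_congr rfl fun σ _ => ?_
    simp [Equiv.Perm.mul_apply, Equiv.swap_apply_left]
  rw [h0, ← Equiv.sum_comp (Equiv.Perm.decomposeFin (n := n)).symm
      (fun σ => g (σ 0))]
  rw [Fintype.sum_prod_type]
  simp only [Equiv.Perm.decomposeFin_symm_apply_zero, Finset.sum_const, Finset.card_univ,
    Fintype.card_perm, Fintype.card_fin, nsmul_eq_mul]
  rw [← Finset.mul_sum]

section meas
variable {m : ℕ}

lemma meas_entry (k i : Fin m) :
    Measurable fun Q : Fin m → Fin m → ℝ => (Q k i) ^ 2 :=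
  ((measurable_pi_apply i).comp (measurable_pi_apply k)).pow_const 2

lemma ortho_ae (μ : Measure (Fin m → Fin m → ℝ)) [IsProbabilityMeasure μ]
    (hsupp : μ {Q | (Matrix.of Q)ᵀ * Matrix.of Q = 1} = 1) :
    ∀ᵐ Q ∂μ, (Matrix.of Q)ᵀ * Matrix.of Q = 1 := by
  have hset : {Q : Fin m → Fin m → ℝ | (Matrix.of Q)ᵀ * Matrix.of Q = 1}
      = ⋂ i, ⋂ j, {Q : Fin m → Fin m → ℝ |
          ∑ k, Q k i * Q k j = (1 : Matrix (Fin m) (Fin m) ℝ) i j} := by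
    ext Q
    simp only [Set.mem_setOf_eq, Set.mem_iInter, ← Matrix.ext_iff]
    have key : ∀ i j, ((Matrix.of Q)ᵀ * Matrix.of Q) i j = ∑ k, Q k i * Q k j :=
      fun i j => by rw [Matrix.mul_apply]; rfl
    constructor
    · intro h i j; rw [← key i j]; exact h i j
    · intro h i j; rw [key i j]; exact h i j
  have hmeas : MeasurableSet {Q : Fin m → Fin m → ℝ | (Matrix.of Q)ᵀ * Matrix.of Q = 1} := by
    rw [hset]
    refine MeasurableSet.iInter fun i => MeasurableSet.iInter fun j => ?_
    refine measurableSet_eq_fun ?_ measurable_const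
    exact Finset.measurable_sum _ fun k _ =>
      Measurable.mul (f := fun Q : Fin m → Fin m → ℝ => Q k i) (g := fun Q => Q k j)
        ((measurable_pi_apply i).comp (measurable_pi_apply k))
        ((measurable_pi_apply j).comp (measurable_pi_apply k))
  have hc : μ {Q : Fin m → Fin m → ℝ | (Matrix.of Q)ᵀ * Matrix.of Q = 1}ᶜ = 0 :=
    (prob_compl_eq_zero_iff hmeas).mpr hsupp
  exact mem_ae_iff.mpr hc

variable (μ : Measure (Fin m → Fin m → ℝ)) [IsProbabilityMeasure μ]
  (hsupp : μ {Q | (Matrix.of Q)ᵀ * Matrix.of Q = 1} = 1)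

include hsupp

lemma int_entry (k i : Fin m) :
    Integrable (fun Q : Fin m → Fin m → ℝ => (Q k i) ^ 2) μ := by
  refine Integrable.mono' (integrable_const 1) (meas_entry k i).aestronglyMeasurable ?_
  filter_upwards [ortho_ae μ hsupp] with Q hQ
  have h1 : ∑ k', Q k' i * Q k' i = 1 := by
    have := congrArg (fun M => M i i) hQ
    simpa [Matrix.mul_apply, Matrix.one_apply] using this
  rw [Real.norm_of_nonneg (sq_nonneg _)]
  calc (Q k i) ^ 2 ≤ ∑ k', Q k' i * Q k' i := by
        rw [sq]
        exact Finset.single_le_sum (fun l _ => mul_self_nonneg (Q l i)) (Finset.mem_univ k)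
    _ = 1 := h1

variable (hinv : ∀ P : Matrix (Fin m) (Fin m) ℝ, Pᵀ * P = 1 →
    μ.map (fun Q => Matrix.of.symm (P * Matrix.of Q)) = μ)

include hinv

lemma integral_entry_swap (k k' i : Fin m) :
    ∫ Q, (Q k i) ^ 2 ∂μ = ∫ Q, (Q k' i) ^ 2 ∂μ := by
  set σ := Equiv.swap k k' with hσ
  have h := hinv (σ.permMatrix ℝ) (perm_orth σ)
  have hT : (fun Q : Fin m → Fin m → ℝ => Matrix.of.symm ((σ.permMatrix ℝ) * Matrix.of Q))
      = fun Q => fun r => Q (σ r) := by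
    funext Q r c
    show ((σ.permMatrix ℝ) * Matrix.of Q) r c = Q (σ r) c
    rw [Equiv.Perm.permMatrix, PEquiv.toMatrix_toPEquiv_mul]
    rfl
  have hTm : Measurable fun Q : Fin m → Fin m → ℝ =>
      Matrix.of.symm ((σ.permMatrix ℝ) * Matrix.of Q) := by
    rw [hT]
    exact measurable_pi_lambda _ fun r => measurable_pi_apply (σ r)
  calc ∫ Q, (Q k i) ^ 2 ∂μ
      = ∫ Q, (Q k i) ^ 2 ∂(μ.map (fun Q => Matrix.of.symm ((σ.permMatrix ℝ) * Matrix.of Q))) := by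
        rw [h]
    _ = ∫ Q, ((Matrix.of.symm ((σ.permMatrix ℝ) * Matrix.of Q) : Fin m → Fin m → ℝ) k i) ^ 2 ∂μ := by
        refine integral_map hTm.aemeasurable ?_
        exact (meas_entry k i).aestronglyMeasurable
    _ = ∫ Q, (Q k' i) ^ 2 ∂μ := by
        refine integral_congr_ae (Filter.Eventually.of_forall fun Q => ?_)
        have h2 := congrFun (congrFun (congrFun hT Q) k) i
        dsimp only at h2 ⊢
        rw [h2, show σ k = k' from Equiv.swap_apply_left k k']

lemma integral_entry (k i : Fin m) :
    ∫ Q, (Q k i) ^ 2 ∂μ = 1 / (m : ℝ) := by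
  have hm : 0 < m := Fin.pos i
  have hsum : ∑ k' : Fin m, ∫ Q, (Q k' i) ^ 2 ∂μ = 1 := by
    rw [← integral_finset_sum _ (fun k' _ => int_entry μ hsupp k' i)]
    have : ∫ Q, ∑ k' : Fin m, (Q k' i) ^ 2 ∂μ = ∫ (_ : Fin m → Fin m → ℝ), (1 : ℝ) ∂μ := by
      refine integral_congr_ae ?_
      filter_upwards [ortho_ae μ hsupp] with Q hQ
      have := congrArg (fun M => M i i) hQ
      simpa [Matrix.mul_apply, Matrix.one_apply, sq] using this
    rw [this]; simp
  have heach : ∀ k' : Fin m, ∫ Q, (Q k' i) ^ 2 ∂μ = ∫ Q, (Q k i) ^ 2 ∂μ :=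
    fun k' => integral_entry_swap μ hsupp hinv k' k i
  rw [Finset.sum_congr rfl (fun k' _ => heach k')] at hsum
  rw [Finset.sum_const, Finset.card_univ, Fintype.card_fin, nsmul_eq_mul] at hsum
  field_simp
  linarith [hsum]

lemma integrable_S (f g : Fin m → ℝ) :
    Integrable (fun Q : Fin m → Fin m → ℝ => S f g (Matrix.of Q)) μ := by
  have : (fun Q : Fin m → Fin m → ℝ => S f g (Matrix.of Q))
      = fun Q => ∑ i, ∑ k, f i * g k * (Q k i) ^ 2 := rfl
  rw [this]
  exact integrable_finset_sum _ fun i _ => integrable_finset_sum _ fun k _ =>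
    (int_entry μ hsupp k i).const_mul _

lemma integral_S (f g : Fin m → ℝ) :
    ∫ Q, S f g (Matrix.of Q) ∂μ = (∑ i, f i) * (∑ k, g k) / m := by
  have h1 : ∫ Q, S f g (Matrix.of Q) ∂μ
      = ∑ i, ∑ k, f i * g k * ∫ Q, (Q k i) ^ 2 ∂μ := by
    rw [show (fun Q : Fin m → Fin m → ℝ => S f g (Matrix.of Q))
      = fun Q => ∑ i, ∑ k, f i * g k * (Q k i) ^ 2 from rfl]
    rw [integral_finset_sum _ fun i _ => integrable_finset_sum _ fun k _ =>
      (int_entry μ hsupp k i).const_mul _]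
    refine Finset.sum_congr rfl fun i _ => ?_
    rw [integral_finset_sum _ fun k _ => (int_entry μ hsupp k i).const_mul _]
    exact Finset.sum_congr rfl fun k _ => integral_const_mul _ _
  rw [h1]
  rw [Finset.sum_congr rfl (fun i _ => Finset.sum_congr rfl
    (fun k _ => by rw [integral_entry μ hsupp hinv k i]))]
  rw [Finset.sum_mul_sum, Finset.sum_div]
  refine Finset.sum_congr rfl fun i _ => ?_
  rw [Finset.sum_div]
  exact Finset.sum_congr rfl fun k _ => mul_one_div _ _

end meas

lemma sum_perm_S {n : ℕ} (f g : Fin (n + 1) → ℝ) :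
    ∑ σ : Equiv.Perm (Fin (n + 1)), ∑ k, f (σ k) * g k
      = (Nat.factorial n : ℝ) * ((∑ i, f i) * (∑ k, g k)) := by
  rw [Finset.sum_comm]
  have h : ∀ k, ∑ σ : Equiv.Perm (Fin (n + 1)), f (σ k) * g k
      = ((Nat.factorial n : ℝ) * ∑ i, f i) * g k := by
    intro k; rw [← Finset.sum_mul, sum_perm_apply]
  rw [Finset.sum_congr rfl fun k _ => h k, ← Finset.mul_sum]
  ring

section main
variable {m : ℕ} (μ : Measure (Fin m → Fin m → ℝ)) [IsProbabilityMeasure μ]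
  (hsupp : μ {Q | (Matrix.of Q)ᵀ * Matrix.of Q = 1} = 1)
  (hinv : ∀ P : Matrix (Fin m) (Fin m) ℝ, Pᵀ * P = 1 →
      μ.map (fun Q => Matrix.of.symm (P * Matrix.of Q)) = μ)
  (a b : Fin m → ℝ)

include hsupp

lemma integral_trace1 :
    ∫ Q, ((diagonal a + (Matrix.of Q)ᵀ * diagonal b * Matrix.of Q) ^ 1).trace ∂μ
      = ∑ i, a i + ∑ i, b i := by
  rw [integral_congr_ae ((ortho_ae μ hsupp).mono fun Q hQ => trace_pow_one (Matrix.of Q) hQ a b)]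
  simp

include hinv

lemma integral_trace2 :
    ∫ Q, ((diagonal a + (Matrix.of Q)ᵀ * diagonal b * Matrix.of Q) ^ 2).trace ∂μ
      = ∑ i, a i ^ 2 + ∑ i, b i ^ 2 + 2 * ((∑ i, a i) * (∑ i, b i) / m) := by
  rw [integral_congr_ae ((ortho_ae μ hsupp).mono fun Q hQ => trace_pow_two (Matrix.of Q) hQ a b)]
  rw [integral_add (integrable_const _) ((integrable_S μ hsupp hinv a b).const_mul 2),
    integral_const_mul, integral_S μ hsupp hinv a b]
  simp

lemma integral_trace3 :
    ∫ Q, ((diagonal a + (Matrix.of Q)ᵀ * diagonal b * Matrix.of Q) ^ 3).trace ∂μ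
      = ∑ i, a i ^ 3 + ∑ i, b i ^ 3
        + 3 * ((∑ i, a i ^ 2) * (∑ i, b i) / m)
        + 3 * ((∑ i, a i) * (∑ i, b i ^ 2) / m) := by
  rw [integral_congr_ae ((ortho_ae μ hsupp).mono fun Q hQ => trace_pow_three (Matrix.of Q) hQ a b)]
  have hS1 : Integrable (fun Q : Fin m → Fin m → ℝ =>
      3 * S (fun i => a i ^ 2) b (Matrix.of Q)) μ :=
    (integrable_S μ hsupp hinv _ _).const_mul 3
  have hS2 : Integrable (fun Q : Fin m → Fin m → ℝ =>
      3 * S a (fun i => b i ^ 2) (Matrix.of Q)) μ :=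
    (integrable_S μ hsupp hinv _ _).const_mul 3
  have hC : Integrable (fun _ : Fin m → Fin m → ℝ => ∑ i, a i ^ 3 + ∑ i, b i ^ 3) μ :=
    integrable_const _
  have h12 : Integrable (fun Q : Fin m → Fin m → ℝ =>
      ∑ i, a i ^ 3 + ∑ i, b i ^ 3 + 3 * S (fun i => a i ^ 2) b (Matrix.of Q)) μ := hC.add hS1
  rw [integral_add h12 hS2, integral_add hC hS1, integral_const_mul, integral_const_mul,
    integral_S μ hsupp hinv, integral_S μ hsupp hinv]
  simp

end main


/-- **Matching Three Moments Theorem, deterministic eigenvalue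
version.** For diagonal matrices `A = diagonal a`, `B = diagonal b` and the
Haar probability measure `μ` on `O(m)`, for each `j ∈ {1,2,3}` the `j`-th moment
of the isotropic sum `A + Qᵀ B Q` equals the `j`-th moment of the classical
(permutation-averaged) sum. -/
theorem matching_three_moments (m : ℕ) (hm : 0 < m)
    (μ : Measure (Fin m → Fin m → ℝ)) [IsProbabilityMeasure μ]
    (hsupp : μ {Q | (Matrix.of Q)ᵀ * Matrix.of Q = 1} = 1)
    (hinv : ∀ P : Matrix (Fin m) (Fin m) ℝ, Pᵀ * P = 1 →
      μ.map (fun Q => Matrix.of.symm (P * Matrix.of Q)) = μ)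
    (a b : Fin m → ℝ) :
    ∀ j : ℕ, j ∈ ({1, 2, 3} : Finset ℕ) →
      (1 / (m : ℝ)) * ∫ Q, ((diagonal a +
          (Matrix.of Q)ᵀ * diagonal b * Matrix.of Q) ^ j).trace ∂μ =
        (1 / (Nat.factorial m : ℝ)) * ∑ σ : Equiv.Perm (Fin m),
          (1 / (m : ℝ)) * ((diagonal a +
            (σ.permMatrix ℝ)ᵀ * diagonal b * σ.permMatrix ℝ) ^ j).trace := by
  intro j hj
  obtain ⟨n, rfl⟩ : ∃ n, m = n + 1 := ⟨m - 1, (Nat.succ_pred_eq_of_pos hm).symm⟩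
  have hm0 : ((n : ℝ) + 1) ≠ 0 := by positivity
  have hf0 : ((Nat.factorial (n + 1) : ℝ)) ≠ 0 :=
    Nat.cast_ne_zero.mpr (Nat.factorial_ne_zero _)
  have hfs : ((Nat.factorial (n + 1) : ℝ)) = ((n : ℝ) + 1) * (Nat.factorial n : ℝ) := by
    rw [Nat.factorial_succ]; push_cast; ring
  fin_cases hj
  · -- j = 1
    rw [integral_trace1 μ hsupp a b,
      Finset.sum_congr rfl (fun (σ : Equiv.Perm (Fin (n+1))) _ => by
        rw [trace_pow_one (σ.permMatrix ℝ) (perm_orth σ) a b]),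
      Finset.sum_const, Finset.card_univ, Fintype.card_perm, Fintype.card_fin, nsmul_eq_mul]
    field_simp
  · -- j = 2
    rw [integral_trace2 μ hsupp hinv a b,
      Finset.sum_congr rfl (fun (σ : Equiv.Perm (Fin (n+1))) _ => by
        rw [trace_pow_two (σ.permMatrix ℝ) (perm_orth σ) a b, S_perm])]
    rw [← Finset.mul_sum]
    simp only [mul_add, Finset.sum_add_distrib, Finset.sum_const, Finset.card_univ,
      Fintype.card_perm, Fintype.card_fin, nsmul_eq_mul, ← Finset.mul_sum]
    rw [sum_perm_S]
    push_cast
    rw [hfs]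
    field_simp
  · -- j = 3
    rw [integral_trace3 μ hsupp hinv a b,
      Finset.sum_congr rfl (fun (σ : Equiv.Perm (Fin (n+1))) _ => by
        rw [trace_pow_three (σ.permMatrix ℝ) (perm_orth σ) a b, S_perm, S_perm])]
    rw [← Finset.mul_sum]
    simp only [mul_add, Finset.sum_add_distrib, Finset.sum_const, Finset.card_univ,
      Fintype.card_perm, Fintype.card_fin, nsmul_eq_mul, ← Finset.mul_sum]
    rw [sum_perm_S (fun i => a i ^ 2) b, sum_perm_S a (fun i => b i ^ 2)]
    push_cast
    rw [hfs]
    field_simp
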